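/- If the boundary of a bounded, open, connected, simply connected set D in the plane is covered by the union of two closed disks whose union is connected, then D itself is contained in the union of the two disks. -/

import Mathlib

open Metric Set

/-- Points on the ray from `p` through `z` beyond `z` stay outside any closed ball
containing `p` but not `z`. -/
lemma ray_not_mem_closedBall {c : ℂ} {r : ℝ} {p z : ℂ} (hp : p ∈ closedBall c r)
    (hz : z ∉ closedBall c r) {t : ℝ} (ht : 1 ≤ t) : p + t • (z - p) ∉ closedBall c r := by
  intro hq
  apply hz
  have ht0 : (0:ℝ) < t := lt_of_lt_of_le one_pos ht
  have key : z = (1 - 1/t) • p + (1/t) • (p + t • (z - p)) := by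
    simp only [Complex.real_smul]
    push_cast
    have htc : (t:ℂ) ≠ 0 := by exact_mod_cast ht0.ne'
    field_simp
    ring
  rw [key]
  exact convex_closedBall c r hp hq (by
      have : 1/t ≤ 1 := by
        rw [div_le_one ht0]; exact ht
      linarith)
    (by positivity) (by ring)

lemma ray_preconnected (p z : ℂ) :
    IsPreconnected ((fun t : ℝ => p + t • (z - p)) '' Ici 1) := by
  apply IsPreconnected.image isPreconnected_Ici
  fun_prop

lemma dist_ray (p z : ℂ) {t : ℝ} (ht : 0 ≤ t) :
    dist (p + t • (z - p)) p = t * ‖z - p‖ := by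
  rw [dist_eq_norm]
  simp [norm_smul, abs_of_nonneg ht]

/-- If the boundary of a bounded, open, connected, simply connected set `D` in the plane
is covered by the union of two closed disks whose union is connected (the disks meet),
then `D` itself is contained in the union of the two disks. -/
theorem boundary_in_two_disks_implies_set_in_two_disks
    (D : Set ℂ) (hD : D.Nonempty) (hopen : IsOpen D)
    (hbdd : Bornology.IsBounded D) (hconn : IsConnected D)
    (hsc : SimplyConnectedSpace ↥D)
    (c₁ c₂ : ℂ) (r₁ r₂ : ℝ)
    (hmeet : (closedBall c₁ r₁ ∩ closedBall c₂ r₂).Nonempty)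
    (hfr : frontier D ⊆ closedBall c₁ r₁ ∪ closedBall c₂ r₂) :
    D ⊆ closedBall c₁ r₁ ∪ closedBall c₂ r₂ := by
  set K := closedBall c₁ r₁ ∪ closedBall c₂ r₂ with hK
  by_contra hsub
  obtain ⟨x, hxD, hxK⟩ := not_subset.1 hsub
  obtain ⟨p, hp1, hp2⟩ := hmeet
  -- a ray from p through a point z outside K stays outside K
  have hray : ∀ z ∉ K, ∀ t : ℝ, 1 ≤ t → p + t • (z - p) ∉ K := by
    intro z hz t ht
    simp only [hK, mem_union, not_or] at hz ⊢
    exact ⟨ray_not_mem_closedBall hp1 hz.1 ht, ray_not_mem_closedBall hp2 hz.2 ht⟩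
  have hpK : p ∈ K := Or.inl hp1
  -- Kᶜ is preconnected
  have hKconn : IsPreconnected Kᶜ := by
    apply isPreconnected_of_forall x
    intro y hy
    have hxp : x ≠ p := fun h => hxK (h ▸ hpK)
    have hyp : y ≠ p := fun h => hy (h ▸ hpK)
    have hxp' : (0:ℝ) < ‖x - p‖ := by simpa [sub_eq_zero] using hxp
    have hyp' : (0:ℝ) < ‖y - p‖ := by simpa [sub_eq_zero] using hyp
    set ρ : ℝ := max (max ‖x - p‖ ‖y - p‖) (max (r₁ + dist p c₁) (r₂ + dist p c₂)) + 1 with hρ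
    have hρx : ‖x - p‖ ≤ ρ := by
      have := le_max_left ‖x - p‖ ‖y - p‖
      have := le_max_left (max ‖x - p‖ ‖y - p‖) (max (r₁ + dist p c₁) (r₂ + dist p c₂))
      linarith [le_max_left ‖x - p‖ ‖y - p‖,
        le_max_left (max ‖x - p‖ ‖y - p‖) (max (r₁ + dist p c₁) (r₂ + dist p c₂))]
    have hρy : ‖y - p‖ ≤ ρ := by
      linarith [le_max_right ‖x - p‖ ‖y - p‖,
        le_max_left (max ‖x - p‖ ‖y - p‖) (max (r₁ + dist p c₁) (r₂ + dist p c₂))]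
    have hρ1 : r₁ + dist p c₁ < ρ := by
      linarith [le_max_left (r₁ + dist p c₁) (r₂ + dist p c₂),
        le_max_right (max ‖x - p‖ ‖y - p‖) (max (r₁ + dist p c₁) (r₂ + dist p c₂))]
    have hρ2 : r₂ + dist p c₂ < ρ := by
      linarith [le_max_right (r₁ + dist p c₁) (r₂ + dist p c₂),
        le_max_right (max ‖x - p‖ ‖y - p‖) (max (r₁ + dist p c₁) (r₂ + dist p c₂))]
    have hsphere : sphere p ρ ⊆ Kᶜ := by
      intro w hw
      simp only [mem_sphere_iff_norm] at hw
      simp only [hK, mem_compl_iff, mem_union, not_or, mem_closedBall]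
      constructor
      · intro h
        have := dist_triangle w c₁ p
        rw [dist_comm c₁ p] at this
        rw [← dist_eq_norm] at hw
        linarith [dist_triangle w c₁ p, dist_comm w p ▸ hw]
      · intro h
        rw [← dist_eq_norm] at hw
        have h2 := dist_triangle w c₂ p
        rw [dist_comm c₂ p] at h2
        linarith
    set Rx := (fun t : ℝ => p + t • (x - p)) '' Ici 1 with hRx
    set Ry := (fun t : ℝ => p + t • (y - p)) '' Ici 1 with hRy
    refine ⟨Rx ∪ (sphere p ρ ∪ Ry), ?_, ?_, ?_, ?_⟩
    · rintro w (⟨t, ht, rfl⟩ | (hw | ⟨t, ht, rfl⟩))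
      · exact hray x hxK t ht
      · exact hsphere hw
      · exact hray y hy t ht
    · exact Or.inl ⟨1, self_mem_Ici, by simp⟩
    · exact Or.inr (Or.inr ⟨1, self_mem_Ici, by simp⟩)
    · -- preconnectedness via common points on the sphere
      have hρ0 : (0:ℝ) ≤ ρ := le_trans hxp'.le hρx
      have hxs : p + (ρ / ‖x - p‖) • (x - p) ∈ Rx ∩ sphere p ρ := by
        constructor
        · exact ⟨ρ / ‖x - p‖, (one_le_div hxp').2 hρx, rfl⟩
        · have h0 : (0:ℝ) ≤ ρ / ‖x - p‖ := by positivity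
          rw [mem_sphere, dist_ray p x h0, div_mul_cancel₀]
          exact hxp'.ne'
      have hys : p + (ρ / ‖y - p‖) • (y - p) ∈ Ry ∩ sphere p ρ := by
        constructor
        · exact ⟨ρ / ‖y - p‖, (one_le_div hyp').2 hρy, rfl⟩
        · have h0 : (0:ℝ) ≤ ρ / ‖y - p‖ := by positivity
          rw [mem_sphere, dist_ray p y h0, div_mul_cancel₀]
          exact hyp'.ne'
      have hsph : IsPreconnected (sphere p ρ) :=
        isPreconnected_sphere (by rw [Complex.rank_real_complex]; norm_num) p ρ
      have h1 : IsPreconnected (sphere p ρ ∪ Ry) :=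
        IsPreconnected.union _ hys.2 hys.1 hsph (ray_preconnected p y)
      exact IsPreconnected.union _ hxs.1 (Or.inl hxs.2) (ray_preconnected p x) h1
  -- Kᶜ ⊆ D
  have hsubU : Kᶜ ⊆ D ∪ (closure D)ᶜ := by
    intro w hw
    by_cases h : w ∈ closure D
    · left
      by_cases hD' : w ∈ D
      · exact hD'
      · exact absurd (hfr ⟨h, fun hi => hD' (interior_subset hi)⟩) hw
    · exact Or.inr h
  have hKD : Kᶜ ⊆ D := by
    apply hKconn.subset_left_of_subset_union hopen (isClosed_closure.isOpen_compl)
      ?_ hsubU ⟨x, hxK, hxD⟩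
    exact disjoint_compl_right.mono_left subset_closure
  -- contradiction: Kᶜ would be bounded, so the whole plane is bounded
  have hKb : Bornology.IsBounded K := (isBounded_closedBall).union (isBounded_closedBall)
  have : Bornology.IsBounded (univ : Set ℂ) := by
    have : (univ : Set ℂ) ⊆ K ∪ D := by
      intro w _
      by_cases h : w ∈ K
      · exact Or.inl h
      · exact Or.inr (hKD h)
    exact (hKb.union hbdd).subset this
  exact NormedSpace.unbounded_univ ℝ ℂ this
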